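/- For the Hilbert scheme patch coordinates in the case $n=2$: let $f_2 = a_1 b_1 a_2 b_2 - a_1^2 b_2 + a_2^2 b_2^2 \in k[a_1,b_1,a_2,b_2]$ over an algebraically closed field $k$ of characteristic $p>2$. There exists a weighting of the variables under which the initial term of $f_2$ is the squarefree monomial $a_1 b_1 a_2 b_2$; consequently $\mathrm{Tr}(f_2^{p-1}\cdot)$ defines a Frobenius splitting of $k[a_1,b_1,a_2,b_2]$ that compatibly splits the hypersurface $\{f_2 = 0\}$. -/

import Mathlib

open MvPolynomial


/-- The trace map `Tr` on `k[a₁,b₁,a₂,b₂]` (variables indexed `a₁ = X 0`, `b₁ = X 1`,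
`a₂ = X 2`, `b₂ = X 3`). -/
noncomputable def Tr {k : Type*} [Field k] (p n : ℕ) [Fact p.Prime] [CharP k p]
    [PerfectRing k p] (f : MvPolynomial (Fin n) k) : MvPolynomial (Fin n) k :=
  ∑ d ∈ f.support,
    if ∀ i, p ∣ (d i + 1) then
      MvPolynomial.monomial
        (Finsupp.mapRange (fun m => (m + 1) / p - 1)
          (by simp [Nat.div_eq_of_lt (Fact.out : p.Prime).one_lt]) d)
        ((frobeniusEquiv k p).symm (f.coeff d))
    else 0

section Aux

variable {k : Type*} [Field k] (p : ℕ) [Fact p.Prime] [CharP k p] [PerfectRing k p] {n : ℕ}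

/-- summand of Tr -/
noncomputable def Trd (d : Fin n →₀ ℕ) (c : k) : MvPolynomial (Fin n) k :=
  if ∀ i, p ∣ (d i + 1) then
    MvPolynomial.monomial
      (Finsupp.mapRange (fun m => (m + 1) / p - 1)
        (by simp [Nat.div_eq_of_lt (Fact.out : p.Prime).one_lt]) d)
      ((frobeniusEquiv k p).symm c)
  else 0

lemma Tr_def (f : MvPolynomial (Fin n) k) :
    Tr p n f = ∑ d ∈ f.support, Trd p d (f.coeff d) := rfl

@[simp] lemma Trd_zero (d : Fin n →₀ ℕ) : Trd p d (0 : k) = 0 := by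
  unfold Trd
  split <;> simp

lemma Trd_add (d : Fin n →₀ ℕ) (c c' : k) :
    Trd p d (c + c') = Trd p d c + Trd p d c' := by
  unfold Trd
  split <;> simp

lemma Tr_eq_sum_subset {f : MvPolynomial (Fin n) k} {S : Finset (Fin n →₀ ℕ)}
    (hS : f.support ⊆ S) : Tr p n f = ∑ d ∈ S, Trd p d (f.coeff d) := by
  rw [Tr_def]
  refine Finset.sum_subset hS fun d _ hd => ?_
  rw [notMem_support_iff] at hd
  simp [hd]

lemma Tr_add (f g : MvPolynomial (Fin n) k) :
    Tr p n (f + g) = Tr p n f + Tr p n g := by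
  classical
  rw [Tr_eq_sum_subset p (support_add (p := f) (q := g)),
    Tr_eq_sum_subset p (Finset.subset_union_left (s₁ := f.support) (s₂ := g.support)),
    Tr_eq_sum_subset p (Finset.subset_union_right (s₁ := f.support) (s₂ := g.support)),
    ← Finset.sum_add_distrib]
  refine Finset.sum_congr rfl fun d _ => ?_
  rw [coeff_add, Trd_add]

@[simp] lemma Tr_zero : Tr p n (0 : MvPolynomial (Fin n) k) = 0 := by
  simp [Tr_def]

lemma Tr_monomial (e : Fin n →₀ ℕ) (c : k) :
    Tr p n (monomial e c) = Trd p e c := by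
  classical
  by_cases hc : c = 0
  · simp [hc]
  · rw [Tr_def, support_monomial, if_neg hc, Finset.sum_singleton, coeff_monomial, if_pos rfl]

lemma Tr_eq_zero_of (f : MvPolynomial (Fin n) k)
    (h : ∀ d ∈ f.support, ¬ ∀ i, p ∣ (d i + 1)) : Tr p n f = 0 := by
  rw [Tr_def]
  refine Finset.sum_eq_zero fun d hd => ?_
  rw [Trd, if_neg (h d hd)]

end Aux
section Aux2
variable {k : Type*} [Field k] (p : ℕ) [Fact p.Prime] [CharP k p] [PerfectRing k p] {n : ℕ}

/-- Tr as an additive monoid hom -/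
noncomputable def TrHom : MvPolynomial (Fin n) k →+ MvPolynomial (Fin n) k where
  toFun := Tr p n
  map_zero' := Tr_zero p
  map_add' := Tr_add p

lemma mapRange_aux (hp0 : 0 < p) (d e : Fin n →₀ ℕ) (hcond : ∀ i, p ∣ e i + 1)
    (h0 : (fun m => (m + 1) / p - 1) 0 = 0) :
    Finsupp.mapRange (fun m => (m + 1) / p - 1) h0 (p • d + e)
      = d + Finsupp.mapRange (fun m => (m + 1) / p - 1) h0 e := by
  ext i
  obtain ⟨q, hq⟩ := hcond i
  have hq1 : 1 ≤ q := by
    rcases Nat.eq_zero_or_pos q with h | h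
    · rw [h, Nat.mul_zero] at hq; omega
    · exact h
  simp only [Finsupp.mapRange_apply, Finsupp.add_apply, Finsupp.smul_apply, smul_eq_mul]
  rw [Nat.add_assoc, hq, ← Nat.mul_add, Nat.mul_div_cancel_left _ hp0,
    Nat.mul_div_cancel_left _ hp0]
  omega

lemma key_mono (d : Fin n →₀ ℕ) (c : k) (g : MvPolynomial (Fin n) k) :
    Tr p n (monomial (p • d) (c ^ p) * g) = monomial d c * Tr p n g := by
  classical
  have hp0 : 0 < p := (Fact.out : p.Prime).pos
  induction g using MvPolynomial.induction_on' with
  | add q r hq hr =>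
      rw [mul_add, Tr_add, Tr_add, hq, hr, mul_add]
  | monomial e c' =>
      rw [monomial_mul, Tr_monomial, Tr_monomial]
      unfold Trd
      by_cases hcond : ∀ i, p ∣ (e i + 1)
      · have hcond' : ∀ i, p ∣ ((p • d + e) i + 1) := by
          intro i
          simp only [Finsupp.add_apply, Finsupp.smul_apply, smul_eq_mul]
          rw [Nat.add_assoc]
          exact (Nat.dvd_add_right ⟨d i, rfl⟩).mpr (hcond i)
        have hc : (frobeniusEquiv k p).symm (c ^ p) = c := by
          rw [← frobenius_def]; exact frobeniusEquiv_symm_apply_frobenius k p c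
        rw [if_pos hcond', if_pos hcond, monomial_mul, map_mul, hc,
          mapRange_aux p hp0 d e hcond]
      · have hcond' : ¬ ∀ i, p ∣ ((p • d + e) i + 1) := by
          intro h
          apply hcond
          intro i
          have h1 := h i
          simp only [Finsupp.add_apply, Finsupp.smul_apply, smul_eq_mul] at h1
          rw [Nat.add_assoc] at h1
          exact (Nat.dvd_add_right ⟨d i, rfl⟩).mp h1
        rw [if_neg hcond', if_neg hcond, mul_zero]

lemma Tr_pow_mul (a g : MvPolynomial (Fin n) k) :
    Tr p n (a ^ p * g) = a * Tr p n g := by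
  classical
  have hsum : a ^ p = ∑ d ∈ a.support, monomial (p • d) (coeff d a ^ p) := by
    conv_lhs => rw [a.as_sum]
    rw [sum_pow_char]
    exact Finset.sum_congr rfl fun d _ => by rw [monomial_pow]
  rw [hsum, Finset.sum_mul,
    show Tr p n (∑ d ∈ a.support, monomial (p • d) (coeff d a ^ p) * g)
      = ∑ d ∈ a.support, Tr p n (monomial (p • d) (coeff d a ^ p) * g) from
      map_sum (TrHom p) _ _]
  conv_rhs => rw [a.as_sum]
  rw [Finset.sum_mul]
  exact Finset.sum_congr rfl fun d _ => key_mono p d _ g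

end Aux2
section Aux3
variable {k : Type*} [Field k] (p : ℕ) [Fact p.Prime] [CharP k p] [PerfectRing k p]

noncomputable def E1 : Fin 4 →₀ ℕ :=
  Finsupp.single 0 1 + Finsupp.single 1 1 + Finsupp.single 2 1 + Finsupp.single 3 1
noncomputable def E2 : Fin 4 →₀ ℕ := Finsupp.single 0 2 + Finsupp.single 3 1
noncomputable def E3 : Fin 4 →₀ ℕ := Finsupp.single 2 2 + Finsupp.single 3 2

lemma E1_apply : ∀ i, E1 i = 1 := by
  intro i
  fin_cases i <;> simp [E1, Finsupp.single_apply]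

lemma E2_apply : E2 0 = 2 ∧ E2 1 = 0 ∧ E2 2 = 0 ∧ E2 3 = 1 := by
  refine ⟨?_, ?_, ?_, ?_⟩ <;> simp [E2, Finsupp.single_apply]

lemma E3_apply : E3 0 = 0 ∧ E3 1 = 0 ∧ E3 2 = 2 ∧ E3 3 = 2 := by
  refine ⟨?_, ?_, ?_, ?_⟩ <;> simp [E3, Finsupp.single_apply]

lemma f2_eq :
    (X 0 * X 1 * X 2 * X 3 - X 0 ^ 2 * X 3 + X 2 ^ 2 * X 3 ^ 2 : MvPolynomial (Fin 4) k)
      = monomial E1 1 + ((monomial E3 1 : MvPolynomial (Fin 4) k) - monomial E2 1) := by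
  have h1 : (X 0 * X 1 * X 2 * X 3 : MvPolynomial (Fin 4) k) = monomial E1 1 := by
    rw [show (X 0 * X 1 * X 2 * X 3 : MvPolynomial (Fin 4) k)
        = X 0 ^ 1 * X 1 ^ 1 * X 2 ^ 1 * X 3 ^ 1 by ring]
    simp only [X_pow_eq_monomial, monomial_mul, mul_one, E1]
  have h2 : (X 0 ^ 2 * X 3 : MvPolynomial (Fin 4) k) = monomial E2 1 := by
    rw [show (X 0 ^ 2 * X 3 : MvPolynomial (Fin 4) k) = X 0 ^ 2 * X 3 ^ 1 by ring]
    simp only [X_pow_eq_monomial, monomial_mul, mul_one, E2]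
  have h3 : (X 2 ^ 2 * X 3 ^ 2 : MvPolynomial (Fin 4) k) = monomial E3 1 := by
    simp only [X_pow_eq_monomial, monomial_mul, mul_one, E3]
  rw [h1, h2, h3]; ring

lemma B_support (d : Fin 4 →₀ ℕ)
    (hd : d ∈ ((monomial E3 1 : MvPolynomial (Fin 4) k) - monomial E2 1).support) :
    d = E3 ∨ d = E2 := by
  classical
  rw [sub_eq_add_neg] at hd
  have := support_add hd
  rw [Finset.mem_union, support_neg] at this
  rcases this with h | h
  · exact Or.inl (Finset.mem_singleton.mp (support_monomial_subset h))
  · exact Or.inr (Finset.mem_singleton.mp (support_monomial_subset h))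

lemma term_support (j m c : ℕ) (d : Fin 4 →₀ ℕ)
    (hd : d ∈ ((monomial E1 1 : MvPolynomial (Fin 4) k) ^ j *
      ((monomial E3 1 : MvPolynomial (Fin 4) k) - monomial E2 1) ^ m *
      (c : MvPolynomial (Fin 4) k)).support) : d 1 = j := by
  classical
  have hB : degreeOf 1 (((monomial E3 1 : MvPolynomial (Fin 4) k) - monomial E2 1) ^ m) = 0 := by
    have hb : degreeOf 1 ((monomial E3 1 : MvPolynomial (Fin 4) k) - monomial E2 1) = 0 := by
      refine Nat.le_zero.mp (degreeOf_le_iff.mpr fun e he => ?_)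
      rcases B_support e he with h | h
      · rw [h, E3_apply.2.1]
      · rw [h, E2_apply.2.1]
    exact Nat.le_zero.mp ((degreeOf_pow_le _ _ _).trans (by rw [hb, Nat.mul_zero]))
  obtain ⟨d₁, hd₁, d₂, hd₂, hsum⟩ := Finset.mem_add.mp (support_mul _ _ hd)
  obtain ⟨d₃, hd₃, d₄, hd₄, hsum'⟩ := Finset.mem_add.mp (support_mul _ _ hd₁)
  have h3 : d₃ = j • E1 := by
    rw [show ((monomial E1 1 : MvPolynomial (Fin 4) k) ^ j) = monomial (j • E1) 1 by
      rw [monomial_pow, one_pow]] at hd₃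
    exact Finset.mem_singleton.mp (support_monomial_subset hd₃)
  have h4 : d₄ 1 = 0 := Nat.le_zero.mp (hB ▸ monomial_le_degreeOf 1 hd₄)
  have h2 : d₂ = 0 := by
    rw [← C_eq_coe_nat, C_apply] at hd₂
    exact Finset.mem_singleton.mp (support_monomial_subset hd₂)
  rw [← hsum, ← hsum', h3, h2, Finsupp.add_apply, Finsupp.add_apply, Finsupp.smul_apply,
    h4, E1_apply, Finsupp.coe_zero, Pi.zero_apply, smul_eq_mul, Nat.mul_one, Nat.add_zero,
    Nat.add_zero]

lemma Tr_f2_pow (hp2 : 2 < p) :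
    Tr p 4 ((X 0 * X 1 * X 2 * X 3 - X 0 ^ 2 * X 3 + X 2 ^ 2 * X 3 ^ 2 :
      MvPolynomial (Fin 4) k) ^ (p - 1)) = 1 := by
  classical
  rw [f2_eq, add_pow]
  rw [Finset.sum_range_succ]
  rw [show Tr p 4 _ = Tr p 4 (∑ j ∈ Finset.range (p-1),
      (monomial E1 1 : MvPolynomial (Fin 4) k) ^ j *
      ((monomial E3 1 : MvPolynomial (Fin 4) k) - monomial E2 1) ^ (p-1-j) *
      ((p-1).choose j : MvPolynomial (Fin 4) k))
    + Tr p 4 ((monomial E1 1 : MvPolynomial (Fin 4) k) ^ (p-1) *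
      ((monomial E3 1 : MvPolynomial (Fin 4) k) - monomial E2 1) ^ (p-1-(p-1)) *
      ((p-1).choose (p-1) : MvPolynomial (Fin 4) k)) from Tr_add p _ _]
  have hzero : Tr p 4 (∑ j ∈ Finset.range (p-1),
      (monomial E1 1 : MvPolynomial (Fin 4) k) ^ j *
      ((monomial E3 1 : MvPolynomial (Fin 4) k) - monomial E2 1) ^ (p-1-j) *
      ((p-1).choose j : MvPolynomial (Fin 4) k)) = 0 := by
    rw [show Tr p 4 (∑ j ∈ Finset.range (p-1), (monomial E1 1 : MvPolynomial (Fin 4) k) ^ j *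
        ((monomial E3 1 : MvPolynomial (Fin 4) k) - monomial E2 1) ^ (p-1-j) *
        ((p-1).choose j : MvPolynomial (Fin 4) k))
      = ∑ j ∈ Finset.range (p-1), Tr p 4 ((monomial E1 1 : MvPolynomial (Fin 4) k) ^ j *
        ((monomial E3 1 : MvPolynomial (Fin 4) k) - monomial E2 1) ^ (p-1-j) *
        ((p-1).choose j : MvPolynomial (Fin 4) k)) from map_sum (TrHom p) _ _]
    refine Finset.sum_eq_zero fun j hj => ?_
    rw [Finset.mem_range] at hj
    refine Tr_eq_zero_of p _ fun d hd h => ?_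
    have hd1 : d 1 = j := term_support j _ _ d hd
    have := Nat.le_of_dvd (by omega) (h 1)
    omega
  rw [hzero, zero_add, Nat.sub_self, pow_zero, mul_one, Nat.choose_self, Nat.cast_one,
    mul_one, show ((monomial E1 1 : MvPolynomial (Fin 4) k) ^ (p-1))
      = monomial ((p-1) • E1) 1 by rw [monomial_pow, one_pow], Tr_monomial]
  unfold Trd
  rw [if_pos]
  · have hexp : Finsupp.mapRange (fun m => (m + 1) / p - 1)
        (by simp [Nat.div_eq_of_lt (Fact.out : p.Prime).one_lt]) ((p-1) • E1)
        = (0 : Fin 4 →₀ ℕ) := by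
      ext i
      simp only [Finsupp.mapRange_apply, Finsupp.smul_apply, smul_eq_mul, E1_apply,
        Finsupp.coe_zero, Pi.zero_apply, Nat.mul_one]
      rw [Nat.sub_add_cancel (by omega : 1 ≤ p), Nat.div_self (by omega : 0 < p)]
      omega
    rw [hexp, map_one, monomial_zero', C_1]
  · intro i
    rw [Finsupp.smul_apply, E1_apply, smul_eq_mul, Nat.mul_one,
      Nat.sub_add_cancel (by omega : 1 ≤ p)]
end Aux3

theorem stmt_19 {k : Type*} [Field k] [IsAlgClosed k] (p : ℕ) [Fact p.Prime] [CharP k p]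
    [PerfectRing k p] (hp2 : 2 < p)
    (f₂ : MvPolynomial (Fin 4) k)
    (hf₂ : f₂ = X 0 * X 1 * X 2 * X 3 - X 0 ^ 2 * X 3 + X 2 ^ 2 * X 3 ^ 2)
    (φ : MvPolynomial (Fin 4) k → MvPolynomial (Fin 4) k)
    (hφ : φ = fun g => Tr p 4 (f₂ ^ (p - 1) * g)) :
    (∃ w : Fin 4 → ℤ, ∀ d ∈ f₂.support, (∀ i, d i = 1) ∨
      ∑ i, w i * (d i : ℤ) < ∑ i, w i) ∧
    (∀ a b, φ (a + b) = φ a + φ b) ∧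
    (∀ a b, φ (a ^ p * b) = a * φ b) ∧
    (φ 1 = 1) ∧
    (∀ g ∈ Ideal.span {f₂}, φ g ∈ Ideal.span {f₂}) := by
  classical
  refine ⟨?_, ?_, ?_, ?_, ?_⟩
  · refine ⟨![1, 4, 1, 1], fun d hd => ?_⟩
    have hsub : f₂.support ⊆ {E1, E3, E2} := by
      rw [hf₂, f2_eq]
      intro e he
      have h := support_add he
      rw [Finset.mem_union] at h
      rcases h with h | h
      · have := Finset.mem_singleton.mp (support_monomial_subset h)
        simp [this]
      · rcases B_support _ h with h' | h' <;> simp [h']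
    have hd3 : d = E1 ∨ d = E3 ∨ d = E2 := by simpa using hsub hd
    rcases hd3 with h | h | h
    · exact Or.inl fun i => by rw [h]; exact E1_apply i
    · right
      rw [h, Fin.sum_univ_four, Fin.sum_univ_four, E3_apply.1, E3_apply.2.1,
        E3_apply.2.2.1, E3_apply.2.2.2]
      decide
    · right
      rw [h, Fin.sum_univ_four, Fin.sum_univ_four, E2_apply.1, E2_apply.2.1,
        E2_apply.2.2.1, E2_apply.2.2.2]
      decide
  · intro a b
    rw [hφ]
    simp only [mul_add, Tr_add]
  · intro a b
    rw [hφ]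
    simp only
    rw [show f₂ ^ (p - 1) * (a ^ p * b) = a ^ p * (f₂ ^ (p - 1) * b) by ring, Tr_pow_mul]
  · rw [hφ]
    simp only [mul_one]
    rw [hf₂]
    exact Tr_f2_pow p hp2
  · intro g hg
    rw [Ideal.mem_span_singleton] at hg ⊢
    obtain ⟨h, rfl⟩ := hg
    rw [hφ]
    simp only
    have hp1 : p - 1 + 1 = p := Nat.sub_add_cancel (by omega : 1 ≤ p)
    have hkey : f₂ ^ (p - 1) * (f₂ * h) = f₂ ^ p * h := by
      conv_rhs => rw [← hp1]
      rw [pow_succ]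
      ring
    rw [hkey, Tr_pow_mul]
    exact ⟨Tr p 4 h, rfl⟩
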